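/- Let A be an isotropic subspace and L a Lagrangian subspace of H. Then ((L + A) ∩ A^⊥)^⊥ = (L ∩ A^⊥) + A; in particular, the orthogonal of (L + A) ∩ A^⊥ is contained in L + A. -/

import Mathlib

open LinearMap.BilinForm

lemma orthogonal_sup' {H : Type*} [AddCommGroup H] [Module ℝ H]
    (ω : LinearMap.BilinForm ℝ H) (B C : Submodule ℝ H) :
    ω.orthogonal (B ⊔ C) = ω.orthogonal B ⊓ ω.orthogonal C := by
  ext x
  simp only [Submodule.mem_inf, mem_orthogonal_iff]
  constructor
  · intro h
    exact ⟨fun b hb => h b (Submodule.mem_sup_left hb),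
      fun c hc => h c (Submodule.mem_sup_right hc)⟩
  · rintro ⟨h1, h2⟩ n hn
    obtain ⟨b, hb, c, hc, rfl⟩ := Submodule.mem_sup.mp hn
    have := h1 b hb
    have := h2 c hc
    rw [map_add, LinearMap.add_apply, ‹ω b x = 0›, ‹ω c x = 0›, add_zero]

/-- Let `A` be an isotropic subspace and `L` a Lagrangian subspace of a
finite-dimensional real symplectic space `(H, ω)`. Then
`((L + A) ∩ A^⊥)^⊥ = (L ∩ A^⊥) + A`; in particular, the orthogonal of `(L + A) ∩ A^⊥`
is contained in `L + A`. -/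
theorem orthogonal_of_contraction
    {H : Type*} [AddCommGroup H] [Module ℝ H] [FiniteDimensional ℝ H]
    (ω : LinearMap.BilinForm ℝ H)
    (hanti : ∀ x y : H, ω x y = -ω y x)
    (hnd : ∀ x : H, (∀ y : H, ω x y = 0) → x = 0)
    (A L : Submodule ℝ H)
    (hA : A ≤ LinearMap.BilinForm.orthogonal ω A)
    (hL : L = LinearMap.BilinForm.orthogonal ω L) :
    LinearMap.BilinForm.orthogonal ω ((L ⊔ A) ⊓ LinearMap.BilinForm.orthogonal ω A) =
        (L ⊓ LinearMap.BilinForm.orthogonal ω A) ⊔ A ∧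
      LinearMap.BilinForm.orthogonal ω ((L ⊔ A) ⊓ LinearMap.BilinForm.orthogonal ω A) ≤
        L ⊔ A := by
  have hrefl : ω.IsRefl := fun x y h => by rw [hanti]; simp [h]
  have hndeg : ω.Nondegenerate :=
    ⟨hnd, fun y hy => hnd y (fun x => by rw [hanti, hy x, neg_zero])⟩
  have hdd : ∀ W : Submodule ℝ H, ω.orthogonal (ω.orthogonal W) = W :=
    fun W => orthogonal_orthogonal hndeg hrefl W
  have h1 : L ⊓ ω.orthogonal A = ω.orthogonal (L ⊔ A) := by
    rw [orthogonal_sup']; rw [← hL]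
  have key : (L ⊔ A) ⊓ ω.orthogonal A = ω.orthogonal ((L ⊓ ω.orthogonal A) ⊔ A) := by
    rw [orthogonal_sup' ω (L ⊓ ω.orthogonal A) A, h1, hdd]
  have heq : ω.orthogonal ((L ⊔ A) ⊓ ω.orthogonal A) = (L ⊓ ω.orthogonal A) ⊔ A := by
    rw [key, hdd]
  refine ⟨heq, ?_⟩
  rw [heq]
  exact sup_le (le_trans inf_le_left le_sup_left) le_sup_right
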